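/- Let n ≥ 1, let A be a real n×n matrix possessing the strong Perron–Frobenius property, and let q be a polynomial with real coefficients such that q(ρ(A)) > 0 and, for every complex root λ of the characteristic polynomial of A with λ ≠ ρ(A), one has |q(λ)| < q(ρ(A)) (where q is evaluated over ℂ). Then the matrix q(A), obtained by evaluating the polynomial q at A, possesses the strong Perron–Frobenius property. -/

import Mathlib

open Polynomial Matrix

/-- The spectral radius of a real matrix: the maximum of the moduli of the complex
roots of its characteristic polynomial. -/
noncomputable def specRadius {n : ℕ} (A : Matrix (Fin n) (Fin n) ℝ) : ℝ :=
  (((A.charpoly.map (algebraMap ℝ ℂ)).roots.map (fun z => ‖z‖₊)).sup : NNReal)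

/-- The strong Perron–Frobenius property for a real matrix. -/
def HasStrongPF {n : ℕ} (A : Matrix (Fin n) (Fin n) ℝ) : Prop :=
  0 < specRadius A ∧
  (A.charpoly.map (algebraMap ℝ ℂ)).rootMultiplicity (specRadius A : ℂ) = 1 ∧
  (∃ x : Fin n → ℝ, (∀ i, 0 < x i) ∧ A.mulVec x = (specRadius A) • x) ∧
  (∀ μ ∈ (A.charpoly.map (algebraMap ℝ ℂ)).roots,
      μ ≠ (specRadius A : ℂ) → ‖μ‖ < specRadius A)

/-- Eventual positivity of a real matrix. -/
def EventuallyPos {n : ℕ} (A : Matrix (Fin n) (Fin n) ℝ) : Prop :=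
  ∃ p : ℕ, ∀ k ≥ p, ∀ i j, 0 < (A ^ k) i j


variable {n : ℕ}

lemma eval_charpoly' (M : Matrix (Fin n) (Fin n) ℂ) (t : ℂ) :
    M.charpoly.eval t = det (Matrix.scalar (Fin n) t - M) := by
  have : (charmatrix M).map (evalRingHom t) = Matrix.scalar (Fin n) t - M := by
    ext i j
    by_cases h : i = j <;> simp [h, charmatrix_apply, Matrix.scalar, Matrix.diagonal]
  rw [Matrix.charpoly, ← this]
  exact (RingHom.map_det (evalRingHom t) _)

lemma card_roots_charpoly (M : Matrix (Fin n) (Fin n) ℂ) :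
    Multiset.card M.charpoly.roots = n := by
  rw [(Polynomial.splits_iff_card_roots).mp (IsAlgClosed.splits M.charpoly),
    M.charpoly_natDegree_eq_dim, Fintype.card_fin]

lemma det_aeval_factor (B : Matrix (Fin n) (Fin n) ℂ) (a : ℂ) :
    det (aeval B (X - C a)) = (B.charpoly.roots.map (fun z => z - a)).prod := by
  have h1 : aeval B (X - C a) = -(Matrix.scalar (Fin n) a - B) := by
    simp [Algebra.algebraMap_eq_smul_one, Matrix.scalar, smul_eq_diagonal_mul]
  have h2 : B.charpoly = (B.charpoly.roots.map (fun z => X - C z)).prod :=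
    (IsAlgClosed.splits _).eq_prod_roots_of_monic B.charpoly_monic
  have h3 : B.charpoly.eval a = (B.charpoly.roots.map (fun z => a - z)).prod := by
    conv_lhs => rw [h2]
    rw [eval_multiset_prod, Multiset.map_map]
    simp
  rw [h1, Matrix.det_neg, ← eval_charpoly', h3, Fintype.card_fin]
  have h4 : (B.charpoly.roots.map (fun z => z - a)) =
      (B.charpoly.roots.map (fun z => a - z)).map (fun x => -x) := by
    rw [Multiset.map_map]; simp
  rw [h4, Multiset.prod_map_neg, Multiset.card_map, card_roots_charpoly]

lemma det_aeval_multiset (B : Matrix (Fin n) (Fin n) ℂ) (m : Multiset ℂ) :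
    det (aeval B (m.map (fun a => X - C a)).prod) =
      (m.map (fun a => det (aeval B (X - C a)))).prod := by
  induction m using Multiset.induction_on with
  | empty => simp
  | cons a m ih =>
    rw [Multiset.map_cons, Multiset.prod_cons, _root_.map_mul, det_mul, ih,
      Multiset.map_cons, Multiset.prod_cons]

lemma det_aeval (B : Matrix (Fin n) (Fin n) ℂ) (f : ℂ[X]) :
    det (aeval B f) = (B.charpoly.roots.map (fun z => f.eval z)).prod := by
  by_cases hf : f = 0
  · subst hf
    rcases Nat.eq_zero_or_pos n with rfl | hn
    · have : B.charpoly.roots = 0 := by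
        rw [← Multiset.card_eq_zero, card_roots_charpoly]
      simp [this, Matrix.det_fin_zero]
    · have : Nonempty (Fin n) := ⟨⟨0, hn⟩⟩
      rw [map_zero, Matrix.det_zero]
      have hcard : 0 < Multiset.card B.charpoly.roots := by
        rw [card_roots_charpoly]; exact hn
      obtain ⟨z, hz⟩ := Multiset.card_pos_iff_exists_mem.mp hcard
      have : (0:ℂ) ∈ B.charpoly.roots.map (fun z => (0:ℂ[X]).eval z) :=
        Multiset.mem_map.mpr ⟨z, hz, by simp only [Polynomial.eval_zero]⟩
      exact (Multiset.prod_eq_zero this).symm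
  · have hsp := (IsAlgClosed.splits f).eq_prod_roots
    conv_lhs => rw [hsp]
    rw [_root_.map_mul, det_mul, det_aeval_multiset]
    have h1 : det (aeval B (C f.leadingCoeff)) = f.leadingCoeff ^ n := by
      rw [aeval_C, Algebra.algebraMap_eq_smul_one, Matrix.det_smul, det_one, mul_one,
        Fintype.card_fin]
    rw [h1]
    have h2 : (f.roots.map (fun a => det (aeval B (X - C a)))).prod =
        (B.charpoly.roots.map (fun z => (f.roots.map (fun a => z - a)).prod)).prod := by
      simp only [det_aeval_factor]
      exact Multiset.prod_map_prod_map f.roots B.charpoly.roots (f := fun a z => z - a)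
    rw [h2]
    have h3 : f.leadingCoeff ^ n = (B.charpoly.roots.map (fun _ => f.leadingCoeff)).prod := by
      rw [Multiset.map_const', Multiset.prod_replicate, card_roots_charpoly]
    rw [h3, ← Multiset.prod_map_mul]
    congr 1
    refine Multiset.map_congr rfl (fun z _ => ?_)
    conv_rhs => rw [hsp]
    rw [eval_mul, eval_C, eval_multiset_prod, Multiset.map_map]
    simp

lemma charpoly_aeval (B : Matrix (Fin n) (Fin n) ℂ) (p : ℂ[X]) :
    (aeval B p).charpoly = (B.charpoly.roots.map (fun z => X - C (p.eval z))).prod := by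
  apply Polynomial.funext; intro t
  rw [eval_charpoly']
  have h : Matrix.scalar (Fin n) t - aeval B p = aeval B (C t - p) := by
    rw [map_sub, aeval_C]
    congr 1
  rw [h, det_aeval, eval_multiset_prod, Multiset.map_map]
  refine congrArg Multiset.prod (Multiset.map_congr rfl fun z _ => ?_)
  simp

lemma roots_charpoly_aeval (B : Matrix (Fin n) (Fin n) ℂ) (p : ℂ[X]) :
    (aeval B p).charpoly.roots = B.charpoly.roots.map (fun z => p.eval z) := by
  rw [charpoly_aeval,
    show (Multiset.map (fun z => X - C (eval z p)) B.charpoly.roots) =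
      Multiset.map (fun a => X - C a) (Multiset.map (fun z => eval z p) B.charpoly.roots) from
      by rw [Multiset.map_map]; rfl,
    roots_multiset_prod_X_sub_C]

lemma map_aeval_matrix (A : Matrix (Fin n) (Fin n) ℝ) (q : ℝ[X]) :
    (aeval A q).map (algebraMap ℝ ℂ) =
      aeval (A.map (algebraMap ℝ ℂ)) (q.map (algebraMap ℝ ℂ)) := by
  have h1 : (aeval A q).map (algebraMap ℝ ℂ) =
      (algebraMap ℝ ℂ).mapMatrix (aeval A q) := rfl
  rw [h1, aeval_def, Polynomial.hom_eval₂, Polynomial.aeval_def, Polynomial.eval₂_map]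
  congr 1
  refine RingHom.ext fun r => ?_
  ext i j
  by_cases hij : i = j <;>
    simp [RingHom.comp_apply, RingHom.mapMatrix_apply, algebraMap_matrix_apply, hij]

lemma roots_real (A : Matrix (Fin n) (Fin n) ℝ) (q : ℝ[X]) :
    ((aeval A q).charpoly.map (algebraMap ℝ ℂ)).roots =
      (A.charpoly.map (algebraMap ℝ ℂ)).roots.map
        (fun z => (q.map (algebraMap ℝ ℂ)).eval z) := by
  rw [← Matrix.charpoly_map, map_aeval_matrix, roots_charpoly_aeval, Matrix.charpoly_map]

lemma mulVec_pow (A : Matrix (Fin n) (Fin n) ℝ) (x : Fin n → ℝ) (r : ℝ)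
    (h : A.mulVec x = r • x) (k : ℕ) : (A ^ k).mulVec x = r ^ k • x := by
  induction k with
  | zero => simp
  | succ k ih =>
    rw [pow_succ, ← Matrix.mulVec_mulVec, h, Matrix.mulVec_smul, ih, smul_smul, pow_succ,
      mul_comm]

lemma mulVec_aeval (A : Matrix (Fin n) (Fin n) ℝ) (x : Fin n → ℝ) (r : ℝ)
    (h : A.mulVec x = r • x) (q : ℝ[X]) :
    (aeval A q).mulVec x = q.eval r • x := by
  induction q using Polynomial.induction_on' with
  | add p q hp hq => rw [map_add, Matrix.add_mulVec, hp, hq, eval_add, add_smul]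
  | monomial k a =>
    rw [aeval_monomial, eval_monomial]
    rw [Algebra.algebraMap_eq_smul_one, smul_mul_assoc, one_mul, Matrix.smul_mulVec,
      mulVec_pow A x r h, smul_smul]

/-- Frobenius polynomials preserve the strong Perron–Frobenius property. -/
theorem strongPF_of_frobenius_polynomial {n : ℕ} (hn : 1 ≤ n)
    (A : Matrix (Fin n) (Fin n) ℝ) (hA : HasStrongPF A)
    (q : Polynomial ℝ) (hq : 0 < q.eval (specRadius A))
    (hmod : ∀ μ ∈ (A.charpoly.map (algebraMap ℝ ℂ)).roots, μ ≠ (specRadius A : ℂ) →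
      ‖(q.map (algebraMap ℝ ℂ)).eval μ‖ < q.eval (specRadius A)) :
    HasStrongPF (Polynomial.aeval A q) := by
  obtain ⟨hr, hmult, ⟨x, hxpos, hxe⟩, hdom⟩ := hA
  set r := specRadius A with hrdef
  set g : ℂ → ℂ := fun z => (q.map (algebraMap ℝ ℂ)).eval z with hg
  set R := (A.charpoly.map (algebraMap ℝ ℂ)).roots with hR
  set s := q.eval r with hs
  have hcount : R.count (r:ℂ) = 1 := by
    rw [hR, Polynomial.count_roots]; exact hmult
  have hrmem : (r:ℂ) ∈ R := Multiset.count_pos.mp (by rw [hcount]; norm_num)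
  have hgr : g (r:ℂ) = ((s : ℝ) : ℂ) := by
    simp only [hg, hs, Polynomial.eval_map]
    exact Polynomial.eval₂_at_apply (algebraMap ℝ ℂ) r
  have habs : ‖((s:ℝ):ℂ)‖ = s := by
    rw [Complex.norm_real, Real.norm_eq_abs, abs_of_pos hq]
  have hner : ∀ z ∈ R, z ≠ (r:ℂ) → g z ≠ ((s:ℝ):ℂ) := by
    intro z hz hne heq
    have h2 : ‖g z‖ < s := hmod z hz hne
    rw [heq, habs] at h2
    exact lt_irrefl _ h2
  have hroots : ((aeval A q).charpoly.map (algebraMap ℝ ℂ)).roots = R.map g := roots_real A q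
  have hsup : specRadius (aeval A q) = s := by
    unfold specRadius
    rw [hroots, Multiset.map_map]
    have key : ((R.map (fun z => ‖g z‖₊)).sup) = s.toNNReal := by
      apply le_antisymm
      · refine Multiset.sup_le.mpr fun b hb => ?_
        obtain ⟨z, hz, rfl⟩ := Multiset.mem_map.mp hb
        by_cases hzr : z = (r:ℂ)
        · subst hzr
          rw [hgr]
          rw [← NNReal.coe_le_coe, coe_nnnorm, habs,
            Real.coe_toNNReal _ hq.le]
        · have := (hmod z hz hzr).le
          rw [← NNReal.coe_le_coe, coe_nnnorm,
            Real.coe_toNNReal _ hq.le]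
          exact this
      · have hmem : ‖g (r:ℂ)‖₊ ∈ R.map (fun z => ‖g z‖₊) :=
          Multiset.mem_map.mpr ⟨(r:ℂ), hrmem, rfl⟩
        have : s.toNNReal = ‖g (r:ℂ)‖₊ := by
          rw [hgr, ← NNReal.coe_inj, coe_nnnorm, habs,
            Real.coe_toNNReal _ hq.le]
        rw [this]
        exact Multiset.le_sup hmem
    have key' : (Multiset.map ((fun z : ℂ => ‖z‖₊) ∘ g) R).sup = s.toNNReal := key
    rw [key', Real.coe_toNNReal _ hq.le]
  refine ⟨?_, ?_, ?_, ?_⟩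
  · rw [hsup]; exact hq
  · rw [← Polynomial.count_roots, hroots, hsup, Multiset.count_map]
    have hfc : R.filter (fun a => ((s:ℝ):ℂ) = g a) = R.filter (fun a => (r:ℂ) = a) := by
      refine Multiset.filter_congr fun a ha => ?_
      constructor
      · intro h
        by_contra hne
        exact hner a ha (fun h' => hne h'.symm) h.symm
      · intro h; rw [← h, hgr]
    rw [hfc, ← Multiset.count_eq_card_filter_eq, hcount]
  · exact ⟨x, hxpos, by rw [hsup]; exact mulVec_aeval A x r hxe q⟩
  · intro μ hμ hne
    rw [hroots] at hμ
    obtain ⟨z, hz, rfl⟩ := Multiset.mem_map.mp hμ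
    rw [hsup] at hne ⊢
    by_cases hzr : z = (r:ℂ)
    · exact absurd (hzr ▸ hgr) hne
    · exact hmod z hz hzr
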